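/- Exponentiating the Gopakumar–Vafa free energy of the resolved conifold gives the infinite product: exp( ∑_{k=1}^∞ e^{2πikt}/(k (2 sin(kλ/2))²) ) = ∏_{m=0}^∞ (1 - Q q^{m+1})^{m+1}, where Q = e^{2πit}, q = e^{iλ}, valid for Im(λ) > 0 and Im(t) sufficiently large so that all series converge absolutely. -/

import Mathlib

open Complex

private lemma norm_exp_lt_one' {z : ℂ} (hz : z.re < 0) : ‖Complex.exp z‖ < 1 := by
  rw [Complex.norm_exp]
  exact Real.exp_lt_one_iff.mpr hz

/-- For `Im λ > 0` and `Im t > 0` (so that all series/products converge),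
with `Q = e^{2πit}` and `q = e^{iλ}`,
`exp(∑_{k≥1} e^{2πikt}/(k (2 sin(kλ/2))²)) = ∏_{m≥0} (1 - Q q^{m+1})^{m+1}`. -/
theorem resolved_conifold_product (lam t : ℂ) (hlam : 0 < lam.im) (ht : 0 < t.im) :
    Complex.exp
        (∑' k : ℕ, Complex.exp (2 * Real.pi * Complex.I * ((k + 1 : ℕ) : ℂ) * t) /
          (((k + 1 : ℕ) : ℂ) * (2 * Complex.sin (((k + 1 : ℕ) : ℂ) * lam / 2)) ^ 2)) =
      ∏' m : ℕ,
        (1 - Complex.exp (2 * Real.pi * Complex.I * t) *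
            Complex.exp (Complex.I * lam) ^ (m + 1)) ^ (m + 1) := by
  set q : ℂ := Complex.exp (Complex.I * lam) with hq_def
  set Q : ℂ := Complex.exp (2 * Real.pi * Complex.I * t) with hQ_def
  have hq : ‖q‖ < 1 := by
    apply norm_exp_lt_one'
    simpa [Complex.mul_re] using hlam
  have hQ : ‖Q‖ < 1 := by
    apply norm_exp_lt_one'
    have hπ : (0:ℝ) < Real.pi := Real.pi_pos
    simp only [Complex.mul_re, Complex.mul_im, Complex.I_re, Complex.I_im,
      Complex.ofReal_re, Complex.ofReal_im, Complex.re_ofNat, Complex.im_ofNat]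
    nlinarith [ht]
  have hq0 : q ≠ 0 := Complex.exp_ne_zero _
  have hqm : ∀ m : ℕ, ‖Q * q ^ (m+1)‖ < 1 := by
    intro m
    rw [norm_mul, norm_pow]
    calc ‖Q‖ * ‖q‖ ^ (m+1) ≤ ‖Q‖ * 1 := by
          gcongr
          exact pow_le_one₀ (norm_nonneg _) hq.le
      _ < 1 := by simpa using hQ
  have hne : ∀ m : ℕ, 1 - Q * q ^ (m+1) ≠ 0 := by
    intro m h
    have h1 : Q * q ^ (m+1) = 1 := by linear_combination -h
    have h2 := hqm m
    rw [h1] at h2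
    simpa using h2
  -- the double series
  set F : ℕ × ℕ → ℂ := fun p =>
    -(((p.1 + 1 : ℕ) : ℂ)) * ((Q * q ^ (p.1+1)) ^ (p.2+1) / ((p.2 + 1 : ℕ) : ℂ)) with hF_def
  -- summability of the double series
  have hsumF : Summable F := by
    apply Summable.of_norm
    have hg1 : Summable (fun m : ℕ => ((m+1 : ℕ) : ℝ) * ‖q‖ ^ (m+1)) := by
      have h := summable_pow_mul_geometric_of_norm_lt_one (R := ℝ) 1
        (r := ‖q‖) (by simpa using hq)
      have h2 := h.comp_injective (add_left_injective 1)
      refine h2.congr fun n => ?_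
      simp [Function.comp_apply]
    have hQq : ‖Q‖ * ‖q‖ < 1 :=
      lt_of_le_of_lt (mul_le_of_le_one_right (norm_nonneg Q) hq.le) hQ
    have hg2 : Summable (fun k : ℕ => (‖Q‖ * ‖q‖) ^ k) :=
      summable_geometric_of_lt_one (by positivity) hQq
    have hg : Summable (fun p : ℕ × ℕ =>
        (((p.1+1 : ℕ) : ℝ) * ‖q‖ ^ (p.1+1)) * (‖Q‖ * ‖q‖) ^ p.2) :=
      hg1.mul_of_nonneg hg2 (fun m => by positivity) (fun k => by positivity)
    apply hg.of_nonneg_of_le (fun p => norm_nonneg _)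
    rintro ⟨m, k⟩
    have hk1 : (1:ℝ) ≤ ((k+1 : ℕ) : ℝ) := by exact_mod_cast Nat.succ_le_succ (Nat.zero_le k)
    have hnorm : ‖F (m, k)‖ =
        ((m+1 : ℕ) : ℝ) * ((‖Q‖ * ‖q‖ ^ (m+1)) ^ (k+1) / ((k+1 : ℕ) : ℝ)) := by
      simp only [hF_def, norm_mul, norm_neg, norm_div, norm_pow, Complex.norm_natCast]
      try ring
    rw [hnorm]
    calc ((m+1 : ℕ) : ℝ) * ((‖Q‖ * ‖q‖ ^ (m+1)) ^ (k+1) / ((k+1 : ℕ) : ℝ))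
        ≤ ((m+1 : ℕ) : ℝ) * (‖Q‖ * ‖q‖ ^ (m+1)) ^ (k+1) := by
          exact mul_le_mul_of_nonneg_left (div_le_self (by positivity) hk1) (by positivity)
      _ = ((m+1 : ℕ) : ℝ) * (‖Q‖ ^ (k+1) * ‖q‖ ^ ((m+1)*(k+1))) := by
          rw [mul_pow, ← pow_mul]
      _ ≤ ((m+1 : ℕ) : ℝ) * (‖Q‖ ^ k * ‖q‖ ^ (m+1+k)) := by
          apply mul_le_mul_of_nonneg_left _ (by positivity)
          exact mul_le_mul (pow_le_pow_of_le_one (norm_nonneg _) hQ.le (by omega))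
            (pow_le_pow_of_le_one (norm_nonneg _) hq.le (by nlinarith))
            (by positivity) (by positivity)
      _ = (((m+1 : ℕ) : ℝ) * ‖q‖ ^ (m+1)) * (‖Q‖ * ‖q‖) ^ k := by
          rw [pow_add, mul_pow]; ring
  -- fiber sums over m (fixed k) : gives the free-energy terms
  have hA : ∀ k : ℕ, HasSum (fun m => F (m, k))
      (Complex.exp (2 * Real.pi * Complex.I * ((k + 1 : ℕ) : ℂ) * t) /
        (((k + 1 : ℕ) : ℂ) * (2 * Complex.sin (((k + 1 : ℕ) : ℂ) * lam / 2)) ^ 2)) := by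
    intro k
    have hzlt : ‖q ^ (k+1)‖ < 1 := by
      rw [norm_pow]
      exact pow_lt_one₀ (norm_nonneg _) hq (by omega)
    set z : ℂ := q ^ (k+1) with hz_def
    have hz0 : z ≠ 0 := pow_ne_zero _ hq0
    have hz1 : (1 : ℂ) - z ≠ 0 := by
      intro h
      have h1 : z = 1 := by linear_combination -h
      rw [h1] at hzlt; simp at hzlt
    have h1 : HasSum (fun m : ℕ => ((m : ℂ)) * z ^ m) (z / (1 - z) ^ 2) :=
      hasSum_coe_mul_geometric_of_norm_lt_one hzlt
    have h2 : HasSum (fun m : ℕ => (((m+1 : ℕ)) : ℂ) * z ^ (m+1)) (z / (1 - z) ^ 2) := by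
      have h2' := (hasSum_nat_add_iff'
        (f := fun m : ℕ => ((m : ℂ)) * z ^ m) 1).mpr h1
      simpa using h2'
    have h3 := h2.mul_left (-(Q ^ (k+1)) / ((k+1 : ℕ) : ℂ))
    have hK0 : ((k+1 : ℕ) : ℂ) ≠ 0 := Nat.cast_ne_zero.mpr (by omega)
    -- identify the sin-square expression
    have hsin : (2 * Complex.sin (((k + 1 : ℕ) : ℂ) * lam / 2)) ^ 2 * z = -(1 - z) ^ 2 := by
      set v : ℂ := Complex.exp (Complex.I * ((k + 1 : ℕ) : ℂ) * lam / 2) with hv_def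
      set w : ℂ := Complex.exp (-(Complex.I * ((k + 1 : ℕ) : ℂ) * lam / 2)) with hw_def
      have hvw : v * w = 1 := by
        rw [hv_def, hw_def, ← Complex.exp_add]
        simpa using Complex.exp_zero
      have hzv : z = v ^ 2 := by
        rw [hz_def, hq_def, hv_def, ← Complex.exp_nat_mul (Complex.I * lam) (k+1),
          ← Complex.exp_nat_mul _ 2]
        congr 1
        push_cast
        ring
      have e1 : -(((k + 1 : ℕ) : ℂ) * lam / 2) * Complex.I
          = -(Complex.I * ((k + 1 : ℕ) : ℂ) * lam / 2) := by ring
      have e2 : (((k + 1 : ℕ) : ℂ) * lam / 2) * Complex.I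
          = Complex.I * ((k + 1 : ℕ) : ℂ) * lam / 2 := by ring
      have hsin_eq : Complex.sin (((k + 1 : ℕ) : ℂ) * lam / 2) = (w - v) * Complex.I / 2 := by
        rw [Complex.sin, e1, e2, ← hv_def, ← hw_def]
      rw [hsin_eq, hzv]
      have hI : Complex.I ^ 2 = -1 := Complex.I_sq
      linear_combination ((w - v)^2 * v^2) * hI - (v*w + 1 - 2*v^2) * hvw
    have hS0 : (2 * Complex.sin (((k + 1 : ℕ) : ℂ) * lam / 2)) ^ 2 ≠ 0 := by
      intro h
      rw [h, zero_mul] at hsin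
      exact hz1 (pow_eq_zero_iff (n := 2) (by norm_num) |>.mp (by linear_combination hsin))
    have hQK : Complex.exp (2 * Real.pi * Complex.I * ((k + 1 : ℕ) : ℂ) * t)
        = Q ^ (k+1) := by
      rw [hQ_def, ← Complex.exp_nat_mul]
      congr 1
      push_cast
      ring
    have hval : Complex.exp (2 * Real.pi * Complex.I * ((k + 1 : ℕ) : ℂ) * t) /
          (((k + 1 : ℕ) : ℂ) * (2 * Complex.sin (((k + 1 : ℕ) : ℂ) * lam / 2)) ^ 2)
        = -(Q ^ (k+1)) / ((k+1 : ℕ) : ℂ) * (z / (1 - z) ^ 2) := by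
      rw [hQK, div_mul_div_comm,
        div_eq_div_iff (mul_ne_zero hK0 hS0) (mul_ne_zero hK0 (pow_ne_zero 2 hz1))]
      linear_combination (Q ^ (k+1) * ((k+1 : ℕ) : ℂ)) * hsin
    rw [hval]
    apply h3.congr_fun
    intro m
    simp only [hF_def]
    rw [mul_pow, show (q ^ (m+1)) ^ (k+1) = z ^ (m+1) by
      rw [hz_def, ← pow_mul, ← pow_mul, mul_comm]]
    push_cast
    ring
  -- fiber sums over k (fixed m) : gives the log terms
  have hB : ∀ m : ℕ, HasSum (fun k => F (m, k))
      ((((m + 1 : ℕ)) : ℂ) * Complex.log (1 - Q * q ^ (m+1))) := by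
    intro m
    have hz : ‖Q * q ^ (m+1)‖ < 1 := hqm m
    have h1 := Complex.hasSum_taylorSeries_neg_log hz
    have h2 : HasSum (fun k : ℕ => (Q * q ^ (m+1)) ^ (k+1) / ((k+1 : ℕ) : ℂ))
        (-Complex.log (1 - Q * q ^ (m+1))) := by
      have h2' := (hasSum_nat_add_iff'
        (f := fun n : ℕ => (Q * q ^ (m+1)) ^ n / (n : ℂ)) 1).mpr h1
      simpa using h2'
    have h3 := h2.mul_left (-(((m + 1 : ℕ)) : ℂ))
    have h4 : -(((m + 1 : ℕ)) : ℂ) * -Complex.log (1 - Q * q ^ (m+1))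
        = (((m + 1 : ℕ)) : ℂ) * Complex.log (1 - Q * q ^ (m+1)) := by ring
    rw [h4] at h3
    exact h3
  -- assemble
  have hFhas : HasSum F (∑' p, F p) := hsumF.hasSum
  have hBsum : HasSum (fun m : ℕ => (((m + 1 : ℕ)) : ℂ) * Complex.log (1 - Q * q ^ (m+1)))
      (∑' p, F p) := hFhas.prod_fiberwise hB
  have hswap : HasSum (F ∘ (Equiv.prodComm ℕ ℕ)) (∑' p, F p) :=
    ((Equiv.prodComm ℕ ℕ).hasSum_iff).mpr hFhas
  have hAsum : HasSum (fun k : ℕ =>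
      Complex.exp (2 * Real.pi * Complex.I * ((k + 1 : ℕ) : ℂ) * t) /
        (((k + 1 : ℕ) : ℂ) * (2 * Complex.sin (((k + 1 : ℕ) : ℂ) * lam / 2)) ^ 2))
      (∑' p, F p) := hswap.prod_fiberwise (fun k => hA k)
  rw [hAsum.tsum_eq]
  have hprod : HasProd (fun m : ℕ => (1 - Q * q ^ (m+1)) ^ (m+1))
      (Complex.exp (∑' p, F p)) := by
    have h := hBsum.cexp
    apply h.congr_fun
    intro m
    simp only [Function.comp]
    rw [Complex.exp_nat_mul, Complex.exp_log (hne m)]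
  exact hprod.tprod_eq.symm
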